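/- Let G and H be finite simple graphs with G connected, and let S be a minimum distance-equalizer set of G⊙H such that for every i ∈ {1, …, n(G)} either V(H_i) ∩ S = ∅ or V(H_i) ⊆ S. If n(H) > min{ α(Ĝ), β(Ĝ) − β*(G) + 1 }, then |U(S)| = β(Ĝ), i.e. U(S) is a minimum vertex cover of Ĝ. -/

import Mathlib

universe u v

variable {V : Type u} {W : Type v}

/-- A distance-equalizer set of a graph: for every pair of distinct vertices outside `S`
there is a vertex of `S` equidistant to both. -/
def IsDistEqSet {α : Type*} (G : SimpleGraph α) (S : Set α) : Prop :=
  ∀ ⦃x y : α⦄, x ∉ S → y ∉ S → x ≠ y → ∃ w ∈ S, G.dist w x = G.dist w y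

/-- The equidistant dimension of a graph: the minimum cardinality of a distance-equalizer set. -/
noncomputable def eqdim {α : Type*} (G : SimpleGraph α) : ℕ :=
  sInf {n | ∃ S : Set α, IsDistEqSet G S ∧ S.ncard = n}

/-- The bisector of two vertices: vertices equidistant to both. -/
def bisector {α : Type*} (G : SimpleGraph α) (x y : α) : Set α :=
  {w | G.dist w x = G.dist w y}

/-- The empty bisector graph of `G`: two distinct vertices are adjacent iff their bisector
in `G` is empty. -/
def emptyBisector {α : Type*} (G : SimpleGraph α) : SimpleGraph α where
  Adj x y := x ≠ y ∧ bisector G x y = ∅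
  symm := by
    constructor
    rintro x y ⟨h1, h2⟩
    refine ⟨h1.symm, Set.eq_empty_iff_forall_notMem.mpr fun w hw => ?_⟩
    exact Set.eq_empty_iff_forall_notMem.mp h2 w
      ((show G.dist w y = G.dist w x from hw).symm)
  loopless := ⟨fun _ h => h.1 rfl⟩

/-- A vertex cover of a graph: a set of vertices meeting every edge. -/
def IsVertexCover {α : Type*} (G : SimpleGraph α) (C : Set α) : Prop :=
  ∀ ⦃x y : α⦄, G.Adj x y → x ∈ C ∨ y ∈ C

/-- An independent set of a graph: a set of pairwise non-adjacent vertices. -/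
def IsIndepSet {α : Type*} (G : SimpleGraph α) (A : Set α) : Prop :=
  ∀ ⦃x y : α⦄, x ∈ A → y ∈ A → ¬ G.Adj x y

/-- The vertex cover number `β(G)`. -/
noncomputable def vcNum {α : Type*} (G : SimpleGraph α) : ℕ :=
  sInf {n | ∃ C : Set α, IsVertexCover G C ∧ C.ncard = n}

/-- The independence number `α(G)`. -/
noncomputable def indepNum {α : Type*} (G : SimpleGraph α) : ℕ :=
  sSup {n | ∃ A : Set α, IsIndepSet G A ∧ A.ncard = n}

/-- A forward-equalized pair `(X, Y)` of `G`: `X ∪ Y = V(G)` and for every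
`a ∈ X \ Y` and `b ∈ Y \ X` there is `w` with `d(w,a) = d(w,b) + 1`. -/
def IsForwardEqualizedPair {α : Type*} (G : SimpleGraph α) (X Y : Set α) : Prop :=
  X ∪ Y = Set.univ ∧
  ∀ ⦃a⦄, a ∈ X \ Y → ∀ ⦃b⦄, b ∈ Y \ X → ∃ w, G.dist w a = G.dist w b + 1

/-- `β*(G)`: the minimum of `|X ∩ Y|` over all pairs of vertex covers `X, Y` of the
empty bisector graph of `G` such that `(X, Y)` is a forward-equalized pair of `G`. -/
noncomputable def betaStar {α : Type*} (G : SimpleGraph α) : ℕ :=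
  sInf {n | ∃ X Y : Set α,
    IsVertexCover (emptyBisector G) X ∧ IsVertexCover (emptyBisector G) Y ∧
    IsForwardEqualizedPair G X Y ∧ (X ∩ Y).ncard = n}

/-- The corona product `G ⊙ H`: one copy of `H` for each vertex `i` of `G` (the vertices
`Sum.inr (i, w)`), with `i` joined to every vertex of its copy. -/
def corona (G : SimpleGraph V) (H : SimpleGraph W) : SimpleGraph (V ⊕ V × W) where
  Adj x y :=
    match x, y with
    | Sum.inl a, Sum.inl b => G.Adj a b
    | Sum.inl a, Sum.inr p => a = p.1
    | Sum.inr p, Sum.inl a => a = p.1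
    | Sum.inr p, Sum.inr q => p.1 = q.1 ∧ H.Adj p.2 q.2
  symm := by
    constructor
    rintro (a | p) (b | q) h
    · exact h.symm
    · exact h
    · exact h
    · exact ⟨h.1.symm, h.2.symm⟩
  loopless := by
    constructor
    rintro (a | p) h
    · exact G.loopless.irrefl a h
    · exact H.loopless.irrefl p.2 h.2

section AuxProof

open SimpleGraph

lemma walk_potential {α : Type*} {K : SimpleGraph α} {D : α → ℕ}
    (hD : ∀ ⦃x y⦄, K.Adj x y → D y ≤ D x + 1) {s t : α} (p : K.Walk s t) :
    D t ≤ D s + p.length := by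
  induction p with
  | nil => simp
  | cons h p ih =>
    simp only [SimpleGraph.Walk.length_cons]
    have := hD h
    omega

lemma dist_ge {α : Type*} {K : SimpleGraph α} {D : α → ℕ}
    (hD : ∀ ⦃x y⦄, K.Adj x y → D y ≤ D x + 1) {s t : α} (h : K.Reachable s t) :
    D t ≤ D s + K.dist s t := by
  obtain ⟨p, hp⟩ := h.exists_walk_length_eq_dist
  have := walk_potential hD p
  omega

lemma dist_adj_le {α : Type*} {K : SimpleGraph α} (hK : K.Connected) {a b c : α} (h : K.Adj b c) :
    K.dist a c ≤ K.dist a b + 1 := by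
  obtain ⟨p, hp⟩ := (hK a b).exists_walk_length_eq_dist
  have := K.dist_le (p.concat h)
  simp only [SimpleGraph.Walk.length_concat] at this
  omega

/-- The natural embedding of `G` into `corona G H`. -/
def coronaHom (G : SimpleGraph V) (H : SimpleGraph W) : G →g corona G H :=
  ⟨Sum.inl, fun h => h⟩

@[simp] lemma coronaHom_apply (G : SimpleGraph V) (H : SimpleGraph W) (a : V) :
    coronaHom G H a = Sum.inl a := rfl

lemma corona_adj_inl_inr (G : SimpleGraph V) (H : SimpleGraph W) (i : V) (w : W) :
    (corona G H).Adj (Sum.inl i) (Sum.inr (i, w)) := rfl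

lemma corona_adj_inr_inl (G : SimpleGraph V) (H : SimpleGraph W) (i : V) (w : W) :
    (corona G H).Adj (Sum.inr (i, w)) (Sum.inl i) := rfl

lemma corona_pot1 (G : SimpleGraph V) (H : SimpleGraph W) (hG : G.Connected) (a : V) :
    ∀ ⦃x y⦄, (corona G H).Adj x y →
      Sum.elim (fun c => G.dist a c) (fun q : V × W => G.dist a q.1 + 1) y ≤
      Sum.elim (fun c => G.dist a c) (fun q : V × W => G.dist a q.1 + 1) x + 1 := by
  rintro (c | q) (d | r) h
  · exact dist_adj_le hG h
  · have : c = r.1 := h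
    simp [← this]
  · have : d = q.1 := h
    simp only [Sum.elim_inl, Sum.elim_inr, this]
    omega
  · have : q.1 = r.1 := h.1
    simp [← this]

lemma corona_dist_inl_inl (G : SimpleGraph V) (H : SimpleGraph W) (hG : G.Connected)
    (a b : V) : (corona G H).dist (Sum.inl a) (Sum.inl b) = G.dist a b := by
  obtain ⟨p, hp⟩ := (hG a b).exists_walk_length_eq_dist
  apply le_antisymm
  · have := (corona G H).dist_le (p.map (coronaHom G H))
    erw [SimpleGraph.Walk.length_map, hp] at this
    exact this
  · have := dist_ge (corona_pot1 G H hG a) ⟨p.map (coronaHom G H)⟩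
    simpa [SimpleGraph.dist_self] using this

lemma corona_dist_inl_inr (G : SimpleGraph V) (H : SimpleGraph W) (hG : G.Connected)
    (a i : V) (w : W) :
    (corona G H).dist (Sum.inl a) (Sum.inr (i, w)) = G.dist a i + 1 := by
  obtain ⟨p, hp⟩ := (hG a i).exists_walk_length_eq_dist
  apply le_antisymm
  · have := (corona G H).dist_le ((p.map (coronaHom G H)).concat
      (corona_adj_inl_inr G H i w))
    erw [SimpleGraph.Walk.length_concat, SimpleGraph.Walk.length_map, hp] at this
    exact this
  · have := dist_ge (corona_pot1 G H hG a)
      ⟨(p.map (coronaHom G H)).concat (corona_adj_inl_inr G H i w)⟩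
    simpa [SimpleGraph.dist_self] using this

lemma corona_pot2 (G : SimpleGraph V) (H : SimpleGraph W) (hG : G.Connected) (i : V)
    [DecidableEq V] :
    ∀ ⦃x y⦄, (corona G H).Adj x y →
      Sum.elim (fun c => G.dist i c + 1)
        (fun q : V × W => if q.1 = i then 0 else G.dist i q.1 + 2) y ≤
      Sum.elim (fun c => G.dist i c + 1)
        (fun q : V × W => if q.1 = i then 0 else G.dist i q.1 + 2) x + 1 := by
  rintro (c | q) (d | r) h
  · have := dist_adj_le (a := i) hG (show G.Adj c d from h)
    simp only [Sum.elim_inl]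
    omega
  · have hc : c = r.1 := h
    by_cases hr : r.1 = i
    · simp [hr]
    · simp only [Sum.elim_inl, Sum.elim_inr, hc]
      rw [if_neg hr]
  · have hd : d = q.1 := h
    by_cases hq : q.1 = i
    · have hdi : d = i := hd.trans hq
      subst hdi
      simp [hq, SimpleGraph.dist_self]
    · simp only [Sum.elim_inl, Sum.elim_inr, hd]
      rw [if_neg hq]
      omega
  · have hqr : q.1 = r.1 := h.1
    simp only [Sum.elim_inr, hqr]
    omega

lemma corona_dist_inr_inr (G : SimpleGraph V) (H : SimpleGraph W) (hG : G.Connected)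
    {i j : V} (hij : i ≠ j) (w w' : W) :
    (corona G H).dist (Sum.inr (i, w)) (Sum.inr (j, w')) = G.dist i j + 2 := by
  classical
  obtain ⟨p, hp⟩ := (hG i j).exists_walk_length_eq_dist
  apply le_antisymm
  · have := (corona G H).dist_le (SimpleGraph.Walk.cons (corona_adj_inr_inl G H i w)
      ((p.map (coronaHom G H)).concat (corona_adj_inl_inr G H j w')))
    erw [SimpleGraph.Walk.length_cons, SimpleGraph.Walk.length_concat,
      SimpleGraph.Walk.length_map, hp] at this
    omega
  · have := dist_ge (corona_pot2 G H hG i)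
      ⟨SimpleGraph.Walk.cons (corona_adj_inr_inl G H i w)
        ((p.map (coronaHom G H)).concat (corona_adj_inl_inr G H j w'))⟩
    simp only [Sum.elim_inr] at this
    rw [if_neg hij.symm] at this
    simp only [if_true] at this
    omega


lemma corona_dist_inr_inl (G : SimpleGraph V) (H : SimpleGraph W) (hG : G.Connected)
    (k a : V) (w : W) :
    (corona G H).dist (Sum.inr (k, w)) (Sum.inl a) = G.dist k a + 1 := by
  rw [SimpleGraph.dist_comm, corona_dist_inl_inr G H hG, SimpleGraph.dist_comm]

lemma ncard_inl_union_inr [Fintype V] [Fintype W] (A : Set V) (T : Set (V × W)) :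
    (Sum.inl '' A ∪ Sum.inr '' T : Set (V ⊕ V × W)).ncard = A.ncard + T.ncard := by
  rw [Set.ncard_union_eq ?_ (Set.toFinite _) (Set.toFinite _),
    Set.ncard_image_of_injective _ Sum.inl_injective,
    Set.ncard_image_of_injective _ Sum.inr_injective]
  rw [Set.disjoint_left]
  rintro x ⟨a, _, rfl⟩ ⟨t, _, h⟩
  exact Sum.inl_ne_inr h.symm

lemma ncard_prod_univ [Fintype V] [Fintype W] (A : Set V) :
    (A ×ˢ (Set.univ : Set W)).ncard = A.ncard * Fintype.card W := by
  rw [← Nat.card_coe_set_eq, Nat.card_congr (Equiv.Set.prod A Set.univ), Nat.card_prod,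
    Nat.card_coe_set_eq, Nat.card_coe_set_eq, Set.ncard_univ, Nat.card_eq_fintype_card]

lemma vcNum_attained {α : Type*} [Fintype α] (K : SimpleGraph α) :
    ∃ C : Set α, _root_.IsVertexCover K C ∧ C.ncard = vcNum K := by
  have hne : ((Set.univ : Set α).ncard) ∈
      {n | ∃ C : Set α, _root_.IsVertexCover K C ∧ C.ncard = n} :=
    ⟨Set.univ, fun x y _ => Or.inl trivial, rfl⟩
  obtain ⟨C, hC, hCc⟩ := Nat.sInf_mem (Set.nonempty_of_mem hne)
  exact ⟨C, hC, hCc⟩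

lemma gallai_lower {α : Type*} [Fintype α] (K : SimpleGraph α) :
    Fintype.card α ≤ _root_.indepNum K + vcNum K := by
  classical
  obtain ⟨C, hC, hCc⟩ := vcNum_attained K
  have hindep : _root_.IsIndepSet K Cᶜ := by
    intro x y hx hy hadj
    rcases hC hadj with h | h
    · exact hx h
    · exact hy h
  have hle : Cᶜ.ncard ≤ _root_.indepNum K := by
    apply le_csSup
    · refine ⟨Fintype.card α, ?_⟩
      rintro n ⟨A, _, rfl⟩
      rw [← Nat.card_eq_fintype_card, ← Set.ncard_univ]
      exact Set.ncard_le_ncard (Set.subset_univ _) (Set.toFinite _)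
    · exact ⟨Cᶜ, hindep, rfl⟩
  have := Set.ncard_add_ncard_compl C
  rw [Nat.card_eq_fintype_card] at this
  omega

lemma branchA_arith (n k sL sU bet ind s : ℕ) (h1 : s = sL + sU * k)
    (h2 : s ≤ n + bet * k) (h3 : bet ≤ sL) (h4 : n ≤ ind + bet) (h5 : ind < k)
    (h6 : bet + 1 ≤ sU) : False := by
  have hmul : (bet + 1) * k ≤ sU * k := Nat.mul_le_mul_right k h6
  rw [Nat.add_mul, Nat.one_mul] at hmul
  omega

lemma branchB_arith (n k sL sU c bet bst s : ℕ) (h1 : s = sL + sU * k)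
    (h2 : s ≤ n + bet * k) (h3 : sL + sU = n + c) (h4 : bst ≤ c)
    (h5 : bet + 1 ≤ sU) (h6 : bet - bst + 1 < k) : False := by
  obtain ⟨t, rfl⟩ : ∃ t, k = t + 1 := ⟨k - 1, by omega⟩
  have hmul : (bet + 1) * t ≤ sU * t := Nat.mul_le_mul_right t h5
  rw [Nat.add_mul, Nat.one_mul] at hmul
  rw [Nat.mul_succ] at h1 h2
  omega

end AuxProof

/-- If `S` is a minimum distance-equalizer set of `G ⊙ H` such that each
copy of `H` is disjoint from or contained in `S`, and
`n(H) > min{α(Ĝ), β(Ĝ) − β*(G) + 1}`, then `U(S)` is a minimum vertex cover of `Ĝ`. -/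
theorem corona_Uset_is_min_vertexCover [Fintype V] [Fintype W]
    (G : SimpleGraph V) (H : SimpleGraph W) (hG : G.Connected)
    (S : Set (V ⊕ V × W)) (hS : IsDistEqSet (corona G H) S)
    (hmin : S.ncard = eqdim (corona G H))
    (hstruct : ∀ i : V, {x : V ⊕ V × W | ∃ w : W, x = Sum.inr (i, w)} ∩ S = ∅ ∨
      {x : V ⊕ V × W | ∃ w : W, x = Sum.inr (i, w)} ⊆ S)
    (hW : min (indepNum (emptyBisector G)) (vcNum (emptyBisector G) - betaStar G + 1) <
      Fintype.card W) :
    IsVertexCover (emptyBisector G) {v : V | ∃ w : W, Sum.inr (v, w) ∈ S} ∧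
    {v : V | ∃ w : W, Sum.inr (v, w) ∈ S}.ncard = vcNum (emptyBisector G) := by
  classical
  have hWpos : 0 < Fintype.card W := lt_of_le_of_lt (Nat.zero_le _) hW
  obtain ⟨w0⟩ : Nonempty W := Fintype.card_pos_iff.mp hWpos
  set Us : Set V := {v : V | ∃ w : W, Sum.inr (v, w) ∈ S} with hUsdef
  set Ls : Set V := {v : V | Sum.inl v ∈ S} with hLsdef
  have hnotU : ∀ {i : V}, i ∉ Us → ∀ w : W, Sum.inr (i, w) ∉ S :=
    fun {i} hi w hw => hi ⟨w, hw⟩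
  have hfull : ∀ {i : V}, i ∈ Us → ∀ w : W, Sum.inr (i, w) ∈ S := by
    intro i hi w
    rcases hstruct i with h | h
    · exfalso
      obtain ⟨w', hw'⟩ := hi
      exact (Set.eq_empty_iff_forall_notMem.mp h (Sum.inr (i, w'))) ⟨⟨w', rfl⟩, hw'⟩
    · exact h ⟨w, rfl⟩
  have hBis : ∀ {u v : V}, (emptyBisector G).Adj u v → ∀ a : V,
      ¬ (G.dist a u = G.dist a v) := by
    intro u v huv a ha
    exact (Set.eq_empty_iff_forall_notMem.mp (huv : u ≠ v ∧ bisector G u v = ∅).2 a) ha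
  have d1 := corona_dist_inl_inl G H hG
  have d2 := corona_dist_inl_inr G H hG
  have d4 := corona_dist_inr_inl G H hG
  -- U is a vertex cover of the empty bisector graph
  have hUcov : IsVertexCover (emptyBisector G) Us := by
    intro u v huv
    by_contra hcon
    push_neg at hcon
    obtain ⟨s, hsS, hd⟩ := hS (hnotU hcon.1 w0) (hnotU hcon.2 w0) (by simp [huv.ne])
    rcases s with a | ⟨k, w⟩
    · rw [d2, d2] at hd
      exact hBis huv a (by omega)
    · have hk : k ∈ Us := ⟨w, hsS⟩
      have hku : k ≠ u := fun h => hcon.1 (h ▸ hk)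
      have hkv : k ≠ v := fun h => hcon.2 (h ▸ hk)
      rw [corona_dist_inr_inr G H hG hku, corona_dist_inr_inr G H hG hkv] at hd
      exact hBis huv k (by omega)
  -- L is a vertex cover of the empty bisector graph
  have hLcov : IsVertexCover (emptyBisector G) Ls := by
    intro u v huv
    by_contra hcon
    push_neg at hcon
    obtain ⟨s, hsS, hd⟩ := hS hcon.1 hcon.2 (by simp [huv.ne])
    rcases s with a | ⟨k, w⟩
    · rw [d1, d1] at hd
      exact hBis huv a hd
    · rw [d4, d4] at hd
      exact hBis huv k (by omega)
  -- L ∪ U = V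
  have hLU : Ls ∪ Us = Set.univ := by
    ext i
    simp only [Set.mem_union, Set.mem_univ, iff_true]
    by_contra hcon
    push_neg at hcon
    obtain ⟨s, hsS, hd⟩ := hS hcon.1 (hnotU hcon.2 w0) (by simp)
    rcases s with a | ⟨k, w⟩
    · rw [d1, d2] at hd
      omega
    · have hk : k ∈ Us := ⟨w, hsS⟩
      have hki : k ≠ i := fun h => hcon.2 (h ▸ hk)
      rw [d4, corona_dist_inr_inr G H hG hki] at hd
      omega
  -- (U, L) is a forward-equalized pair
  have hfwd : IsForwardEqualizedPair G Us Ls := by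
    refine ⟨by rw [Set.union_comm]; exact hLU, ?_⟩
    intro a ha b hb
    obtain ⟨s, hsS, hd⟩ := hS (x := Sum.inl a) (y := Sum.inr (b, w0)) ha.2
      (hnotU hb.2 w0) (by simp)
    rcases s with c | ⟨k, w⟩
    · rw [d1, d2] at hd
      exact ⟨c, hd⟩
    · have hk : k ∈ Us := ⟨w, hsS⟩
      have hkb : k ≠ b := fun h => hb.2 (h ▸ hk)
      rw [d4, corona_dist_inr_inr G H hG hkb] at hd
      exact ⟨k, by omega⟩
  -- decomposition of S
  have hSdec : S = Sum.inl '' Ls ∪ Sum.inr '' (Us ×ˢ (Set.univ : Set W)) := by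
    ext x
    rcases x with v | ⟨i, w⟩
    · constructor
      · intro h
        exact Or.inl ⟨v, h, rfl⟩
      · rintro (⟨c, hc, hceq⟩ | ⟨p, _, hpeq⟩)
        · obtain rfl : c = v := Sum.inl.inj hceq
          exact hc
        · exact absurd hpeq (by simp)
    · constructor
      · intro h
        exact Or.inr ⟨(i, w), ⟨⟨w, h⟩, trivial⟩, rfl⟩
      · rintro (⟨c, _, hceq⟩ | ⟨p, hp, hpeq⟩)
        · exact absurd hceq (by simp)
        · obtain rfl : p = (i, w) := Sum.inr.inj hpeq
          exact hfull hp.1 w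
  have hScard : S.ncard = Ls.ncard + Us.ncard * Fintype.card W := by
    rw [hSdec, ncard_inl_union_inr, ncard_prod_univ]
  obtain ⟨C, hCcov, hCc⟩ := vcNum_attained (emptyBisector G)
  set S1 : Set (V ⊕ V × W) :=
    Sum.inl '' (Set.univ : Set V) ∪ Sum.inr '' (C ×ˢ (Set.univ : Set W)) with hS1def
  have hS1 : IsDistEqSet (corona G H) S1 := by
    intro x y hx hy hxy
    rcases x with a | ⟨i, wi⟩
    · exact absurd (Or.inl ⟨a, trivial, rfl⟩) hx
    rcases y with b | ⟨j, wj⟩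
    · exact absurd (Or.inl ⟨b, trivial, rfl⟩) hy
    have hiC : i ∉ C := fun h => hx (Or.inr ⟨(i, wi), ⟨h, trivial⟩, rfl⟩)
    have hjC : j ∉ C := fun h => hy (Or.inr ⟨(j, wj), ⟨h, trivial⟩, rfl⟩)
    by_cases hij : i = j
    · subst hij
      exact ⟨Sum.inl i, Or.inl ⟨i, trivial, rfl⟩, by rw [d2, d2]⟩
    · have hnadj : ¬ (emptyBisector G).Adj i j := by
        intro h
        rcases hCcov h with h' | h'
        · exact hiC h'
        · exact hjC h'
      have hBne : (bisector G i j).Nonempty := by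
        rcases Set.eq_empty_or_nonempty (bisector G i j) with he | hne
        · exact absurd (⟨hij, he⟩ : i ≠ j ∧ bisector G i j = ∅) hnadj
        · exact hne
      obtain ⟨a, ha⟩ := hBne
      have ha' : G.dist a i = G.dist a j := ha
      exact ⟨Sum.inl a, Or.inl ⟨a, trivial, rfl⟩, by rw [d2, d2, ha']⟩
  have hS1card : S1.ncard = Fintype.card V + vcNum (emptyBisector G) * Fintype.card W := by
    rw [hS1def, ncard_inl_union_inr, ncard_prod_univ, hCc, Set.ncard_univ,
      Nat.card_eq_fintype_card]
  have hSle : S.ncard ≤ Fintype.card V + vcNum (emptyBisector G) * Fintype.card W := by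
    rw [hmin]
    exact hS1card ▸ Nat.sInf_le ⟨S1, hS1, rfl⟩
  have hUge : vcNum (emptyBisector G) ≤ Us.ncard := Nat.sInf_le ⟨Us, hUcov, rfl⟩
  have hLge : vcNum (emptyBisector G) ≤ Ls.ncard := Nat.sInf_le ⟨Ls, hLcov, rfl⟩
  have hbst : betaStar G ≤ (Ls ∩ Us).ncard := by
    rw [Set.inter_comm]
    exact Nat.sInf_le ⟨Us, Ls, hUcov, hLcov, hfwd, rfl⟩
  have hsum : Ls.ncard + Us.ncard = Fintype.card V + (Ls ∩ Us).ncard := by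
    have h := Set.ncard_union_add_ncard_inter Ls Us
    rw [hLU, Set.ncard_univ, Nat.card_eq_fintype_card] at h
    omega
  have hGal := gallai_lower (emptyBisector G)
  refine ⟨hUcov, ?_⟩
  by_contra hne
  have h6 : vcNum (emptyBisector G) + 1 ≤ Us.ncard :=
    lt_of_le_of_ne hUge (fun h => hne h.symm)
  rcases min_lt_iff.mp hW with hA | hB
  · exact branchA_arith _ _ _ _ _ _ _ hScard hSle hLge hGal hA h6
  · exact branchB_arith _ _ _ _ _ _ _ _ hScard hSle hsum hbst h6 hB
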